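/- For every positive integer k, there exists a connected graph with edge metric dimension at most 2k that contains K_{n,n} as a subgraph with n = 2^k. -/

import Mathlib

open SimpleGraph Finset

/-- Distance from an edge (as an unordered pair) to a vertex: the minimum
of the distances from the two endpoints. -/
noncomputable def edgeVertexDist {V : Type*} (G : SimpleGraph V) (e : Sym2 V) (v : V) : ℕ :=
  Sym2.lift ⟨fun x y => min (G.dist x v) (G.dist y v), fun x y => by
    simp [min_comm]⟩ e

/-- `S` is a resolving set for the vertices of `G`. -/
def IsResolvingSet {V : Type*} (G : SimpleGraph V) (S : Set V) : Prop :=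
  ∀ u w : V, (∀ s ∈ S, G.dist u s = G.dist w s) → u = w

/-- `S` is a resolving set for the edges of `G`. -/
def IsEdgeResolvingSet {V : Type*} (G : SimpleGraph V) (S : Set V) : Prop :=
  ∀ e ∈ G.edgeSet, ∀ f ∈ G.edgeSet,
    (∀ s ∈ S, edgeVertexDist G e s = edgeVertexDist G f s) → e = f

/-- The metric dimension of `G`. -/
noncomputable def metricDim {V : Type*} (G : SimpleGraph V) : ℕ :=
  sInf {k | ∃ S : Finset V, S.card = k ∧ IsResolvingSet G (S : Set V)}

/-- The edge metric dimension of `G`. -/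
noncomputable def edgeMetricDim {V : Type*} (G : SimpleGraph V) : ℕ :=
  sInf {k | ∃ S : Finset V, S.card = k ∧ IsEdgeResolvingSet G (S : Set V)}

namespace Stmt12Aux

abbrev V (k : ℕ) : Type := (Fin k → Bool) ⊕ ((Fin k → Bool) ⊕ (Fin k ⊕ Fin k))

variable {k : ℕ}

abbrev L (a : Fin k → Bool) : V k := Sum.inl a
abbrev R (b : Fin k → Bool) : V k := Sum.inr (Sum.inl b)
abbrev U (i : Fin k) : V k := Sum.inr (Sum.inr (Sum.inl i))
abbrev W (i : Fin k) : V k := Sum.inr (Sum.inr (Sum.inr i))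

def Rel : V k → V k → Prop
  | Sum.inl _, Sum.inr (Sum.inl _) => True
  | Sum.inr (Sum.inl _), Sum.inl _ => True
  | Sum.inl a, Sum.inr (Sum.inr (Sum.inl i)) => a i = false
  | Sum.inr (Sum.inr (Sum.inl i)), Sum.inl a => a i = false
  | Sum.inr (Sum.inl b), Sum.inr (Sum.inr (Sum.inr i)) => b i = false
  | Sum.inr (Sum.inr (Sum.inr i)), Sum.inr (Sum.inl b) => b i = false
  | _, _ => False

def G (k : ℕ) : SimpleGraph (V k) where
  Adj := Rel
  symm := ⟨by rintro (a | b | i | j) (a' | b' | i' | j') h <;> simp_all [Rel]⟩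
  loopless := ⟨by rintro (a | b | i | j) h <;> simp_all [Rel]⟩

lemma adj_LR (a b : Fin k → Bool) : (G k).Adj (L a) (R b) := trivial
lemma adj_LU {a : Fin k → Bool} {i : Fin k} (h : a i = false) : (G k).Adj (L a) (U i) := h
lemma adj_RW {b : Fin k → Bool} {i : Fin k} (h : b i = false) : (G k).Adj (R b) (W i) := h

def a0 : Fin k → Bool := fun _ => false

lemma connected (k : ℕ) : (G k).Connected := by
  have hr : ∀ x : V k, (G k).Reachable x (L a0) := by
    rintro (a | b | i | j)
    · exact ((adj_LR a a0).reachable).trans ((adj_LR a0 a0).reachable.symm)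
    · exact ((adj_LR a0 b).symm).reachable
    · exact ((adj_LU (a := a0) (i := i) rfl).symm).reachable
    · exact (((adj_RW (b := a0) (i := j) rfl).symm).reachable).trans
        ((adj_LR a0 a0).reachable).symm
  haveI : Nonempty (V k) := ⟨L a0⟩
  exact SimpleGraph.Connected.mk (fun x y => (hr x).trans (hr y).symm)

lemma dist_pos {x y : V k} (h : x ≠ y) : 1 ≤ (G k).dist x y :=
  (connected k).pos_dist_of_ne h

lemma two_le_dist {x y : V k} (h : x ≠ y) (hna : ¬ (G k).Adj x y) : 2 ≤ (G k).dist x y := by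
  have h1 := (connected k).pos_dist_of_ne h
  have h2 : (G k).dist x y ≠ 1 := fun hh => hna (SimpleGraph.dist_eq_one_iff_adj.mp hh)
  omega

lemma dist_eq_two {x y z : V k} (h : x ≠ y) (hna : ¬ (G k).Adj x y)
    (h1 : (G k).Adj x z) (h2 : (G k).Adj z y) : (G k).dist x y = 2 := by
  have hle := SimpleGraph.dist_le (SimpleGraph.Walk.cons h1 (SimpleGraph.Walk.cons h2 SimpleGraph.Walk.nil))
  simp only [SimpleGraph.Walk.length_cons, SimpleGraph.Walk.length_nil] at hle
  have := two_le_dist h hna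
  omega

-- distances to U j
lemma dist_LU_false {a : Fin k → Bool} {j : Fin k} (h : a j = false) :
    (G k).dist (L a) (U j) = 1 := SimpleGraph.dist_eq_one_iff_adj.mpr (adj_LU h)

lemma dist_LU_true {a : Fin k → Bool} {j : Fin k} (h : a j = true) :
    2 ≤ (G k).dist (L a) (U j) := by
  refine two_le_dist (by simp) (fun hadj => ?_)
  have : a j = false := hadj
  simp [h] at this

lemma dist_RU (b : Fin k → Bool) (j : Fin k) : (G k).dist (R b) (U j) = 2 :=
  dist_eq_two (by simp) (fun hadj => hadj) ((adj_LR a0 b).symm) (adj_LU (a := a0) rfl)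

lemma dist_UU {i j : Fin k} (h : i ≠ j) : (G k).dist (U i) (U j) = 2 :=
  dist_eq_two (by simp [h]) (fun hadj => hadj) ((adj_LU (a := a0) (i := i) rfl).symm)
    (adj_LU (a := a0) rfl)

lemma dist_WU (i j : Fin k) : 2 ≤ (G k).dist (W i) (U j) :=
  two_le_dist (by simp) (fun hadj => hadj)

-- distances to W j
lemma dist_RW_false {b : Fin k → Bool} {j : Fin k} (h : b j = false) :
    (G k).dist (R b) (W j) = 1 := SimpleGraph.dist_eq_one_iff_adj.mpr (adj_RW h)

lemma dist_RW_true {b : Fin k → Bool} {j : Fin k} (h : b j = true) :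
    2 ≤ (G k).dist (R b) (W j) := by
  refine two_le_dist (by simp) (fun hadj => ?_)
  have : b j = false := hadj
  simp [h] at this

lemma dist_LW (a : Fin k → Bool) (j : Fin k) : (G k).dist (L a) (W j) = 2 :=
  dist_eq_two (by simp) (fun hadj => hadj) (adj_LR a a0) (adj_RW (b := a0) rfl)

lemma dist_WW {i j : Fin k} (h : i ≠ j) : (G k).dist (W i) (W j) = 2 :=
  dist_eq_two (by simp [h]) (fun hadj => hadj) ((adj_RW (b := a0) (i := i) rfl).symm)
    (adj_RW (b := a0) rfl)

lemma dist_UW (i j : Fin k) : 2 ≤ (G k).dist (U i) (W j) :=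
  two_le_dist (by simp) (fun hadj => hadj)

lemma evd_mk (x y v : V k) :
    edgeVertexDist (G k) s(x, y) v = min ((G k).dist x v) ((G k).dist y v) := rfl

lemma edge_cases {e : Sym2 (V k)} (he : e ∈ (G k).edgeSet) :
    (∃ a b, e = s(L a, R b)) ∨ (∃ a i, a i = false ∧ e = s(L a, U i)) ∨
      (∃ b i, b i = false ∧ e = s(R b, W i)) := by
  induction e using Sym2.ind with
  | _ x y =>
    rw [SimpleGraph.mem_edgeSet] at he
    rcases x with a | b | i | j <;> rcases y with a' | b' | i' | j'
    · exact (he : False).elim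
    · exact Or.inl ⟨a, b', rfl⟩
    · exact Or.inr (Or.inl ⟨a, i', (he : a i' = false), rfl⟩)
    · exact (he : False).elim
    · exact Or.inl ⟨a', b, Sym2.eq_swap⟩
    · exact (he : False).elim
    · exact (he : False).elim
    · exact Or.inr (Or.inr ⟨b, j', (he : b j' = false), rfl⟩)
    · exact Or.inr (Or.inl ⟨a', i, (he : a' i = false), Sym2.eq_swap⟩)
    · exact (he : False).elim
    · exact (he : False).elim
    · exact (he : False).elim
    · exact (he : False).elim
    · exact Or.inr (Or.inr ⟨b', j, (he : b' j = false), Sym2.eq_swap⟩)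
    · exact (he : False).elim
    · exact (he : False).elim

end Stmt12Aux

namespace Stmt12Aux

variable {k : ℕ}

-- edgeVertexDist evaluations
lemma evd_LR_U (a b : Fin k → Bool) (j : Fin k) :
    edgeVertexDist (G k) s(L a, R b) (U j) = if a j = false then 1 else 2 := by
  rw [evd_mk, dist_RU]
  cases haj : a j
  · simp [dist_LU_false haj]
  · have := dist_LU_true haj
    simp only [Bool.true_eq_false, if_false]
    omega

lemma evd_LR_W (a b : Fin k → Bool) (j : Fin k) :
    edgeVertexDist (G k) s(L a, R b) (W j) = if b j = false then 1 else 2 := by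
  rw [evd_mk, dist_LW]
  cases hbj : b j
  · simp [dist_RW_false hbj]
  · have := dist_RW_true hbj
    simp only [Bool.true_eq_false, if_false]
    omega

lemma evd_LU_U_self (a : Fin k → Bool) (i : Fin k) :
    edgeVertexDist (G k) s(L a, U i) (U i) = 0 := by
  rw [evd_mk, SimpleGraph.dist_self]
  simp

lemma evd_LU_U_ne (a : Fin k → Bool) {i j : Fin k} (hij : i ≠ j) :
    edgeVertexDist (G k) s(L a, U i) (U j) = if a j = false then 1 else 2 := by
  rw [evd_mk, dist_UU hij]
  cases haj : a j
  · simp [dist_LU_false haj]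
  · have := dist_LU_true haj
    simp only [Bool.true_eq_false, if_false]
    omega

lemma evd_LU_W (a : Fin k → Bool) (i j : Fin k) :
    edgeVertexDist (G k) s(L a, U i) (W j) = 2 := by
  rw [evd_mk, dist_LW]
  have := dist_UW i j
  omega

lemma evd_RW_W_self (b : Fin k → Bool) (i : Fin k) :
    edgeVertexDist (G k) s(R b, W i) (W i) = 0 := by
  rw [evd_mk, SimpleGraph.dist_self]
  simp

lemma evd_RW_W_ne (b : Fin k → Bool) {i j : Fin k} (hij : i ≠ j) :
    edgeVertexDist (G k) s(R b, W i) (W j) = if b j = false then 1 else 2 := by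
  rw [evd_mk, dist_WW hij]
  cases hbj : b j
  · simp [dist_RW_false hbj]
  · have := dist_RW_true hbj
    simp only [Bool.true_eq_false, if_false]
    omega

lemma evd_RW_U (b : Fin k → Bool) (i j : Fin k) :
    edgeVertexDist (G k) s(R b, W i) (U j) = 2 := by
  rw [evd_mk, dist_RU]
  have := dist_WU i j
  omega

def S (k : ℕ) : Finset (V k) := (univ.image U) ∪ (univ.image W)

lemma mem_S_U (j : Fin k) : U j ∈ S k := by simp [S]
lemma mem_S_W (j : Fin k) : W j ∈ S k := by simp [S]

lemma card_S (k : ℕ) : (S k).card = 2 * k := by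
  rw [S, card_union_of_disjoint, card_image_of_injective, card_image_of_injective]
  · simp [two_mul]
  · intro i j h; simpa using h
  · intro i j h; simpa using h
  · simp [Finset.disjoint_left]

lemma resolving (k : ℕ) : IsEdgeResolvingSet (G k) ((S k : Set (V k))) := by
  intro e he f hf h
  have hU : ∀ j, edgeVertexDist (G k) e (U j) = edgeVertexDist (G k) f (U j) :=
    fun j => h _ (by exact_mod_cast mem_S_U j)
  have hW : ∀ j, edgeVertexDist (G k) e (W j) = edgeVertexDist (G k) f (W j) :=
    fun j => h _ (by exact_mod_cast mem_S_W j)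
  clear h
  rcases edge_cases he with ⟨a, b, rfl⟩ | ⟨a, i, hai, rfl⟩ | ⟨b, i, hbi, rfl⟩ <;>
    rcases edge_cases hf with ⟨a', b', rfl⟩ | ⟨a', i', hai', rfl⟩ | ⟨b', i', hbi', rfl⟩
  · -- LR vs LR
    have ha : a = a' := by
      funext j
      have hj := hU j
      rw [evd_LR_U, evd_LR_U] at hj
      cases haj : a j <;> cases ha'j : a' j <;> simp_all
    have hb : b = b' := by
      funext j
      have hj := hW j
      rw [evd_LR_W, evd_LR_W] at hj
      cases hbj : b j <;> cases hb'j : b' j <;> simp_all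
    rw [ha, hb]
  · -- LR vs LU
    have hj := hU i'
    rw [evd_LR_U, evd_LU_U_self] at hj
    split_ifs at hj <;> omega
  · -- LR vs RW
    have hj := hW i'
    rw [evd_LR_W, evd_RW_W_self] at hj
    split_ifs at hj <;> omega
  · -- LU vs LR
    have hj := hU i
    rw [evd_LR_U, evd_LU_U_self] at hj
    split_ifs at hj <;> omega
  · -- LU vs LU
    have hii : i = i' := by
      by_contra hne
      have hj := hU i
      rw [evd_LU_U_self, evd_LU_U_ne a' (fun hh => hne hh.symm)] at hj
      split_ifs at hj <;> omega
    subst hii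
    have ha : a = a' := by
      funext j
      by_cases hji : j = i
      · subst hji; rw [hai, hai']
      · have hj := hU j
        rw [evd_LU_U_ne a (fun hh => hji hh.symm), evd_LU_U_ne a' (fun hh => hji hh.symm)] at hj
        cases haj : a j <;> cases ha'j : a' j <;> simp_all
    rw [ha]
  · -- LU vs RW
    have hj := hU i
    rw [evd_LU_U_self, evd_RW_U] at hj
    omega
  · -- RW vs LR
    have hj := hW i
    rw [evd_LR_W, evd_RW_W_self] at hj
    split_ifs at hj <;> omega
  · -- RW vs LU
    have hj := hU i'
    rw [evd_LU_U_self, evd_RW_U] at hj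
    omega
  · -- RW vs RW
    have hii : i = i' := by
      by_contra hne
      have hj := hW i
      rw [evd_RW_W_self, evd_RW_W_ne b' (fun hh => hne hh.symm)] at hj
      split_ifs at hj <;> omega
    subst hii
    have hb : b = b' := by
      funext j
      by_cases hji : j = i
      · subst hji; rw [hbi, hbi']
      · have hj := hW j
        rw [evd_RW_W_ne b (fun hh => hji hh.symm), evd_RW_W_ne b' (fun hh => hji hh.symm)] at hj
        cases hbj : b j <;> cases hb'j : b' j <;> simp_all
    rw [hb]

end Stmt12Aux

/-- For every `k ≥ 1` there is a connected graph of edge metric dimension at most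
`2k` containing `K_{n,n}` with `n = 2^k`. -/
theorem stmt_12 (k : ℕ) (hk : 1 ≤ k) :
    ∃ (V : Type) (_ : Fintype V) (G : SimpleGraph V),
      G.Connected ∧ edgeMetricDim G ≤ 2 * k ∧
        ∃ A B : Finset V, Disjoint A B ∧ A.card = 2 ^ k ∧ B.card = 2 ^ k ∧
          ∀ a ∈ A, ∀ b ∈ B, G.Adj a b := by
  refine ⟨Stmt12Aux.V k, inferInstance, Stmt12Aux.G k, Stmt12Aux.connected k, ?_, ?_⟩
  · exact Nat.sInf_le ⟨Stmt12Aux.S k, Stmt12Aux.card_S k, Stmt12Aux.resolving k⟩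
  · refine ⟨univ.image Stmt12Aux.L, univ.image Stmt12Aux.R, ?_, ?_, ?_, ?_⟩
    · simp [Finset.disjoint_left]
    · rw [card_image_of_injective _ (fun x y h => by simpa using h)]
      simp
    · rw [card_image_of_injective _ (fun x y h => by simpa using h)]
      simp
    · intro a ha b hb
      simp only [mem_image] at ha hb
      obtain ⟨x, -, rfl⟩ := ha
      obtain ⟨y, -, rfl⟩ := hb
      exact Stmt12Aux.adj_LR x y
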